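/- Let t be a homogeneous term in r variables with gcd(t) = 1 and let c ∈ ℤ. Every DFA representing the set {a ∈ ℤ^r : t[a] = c} has at least |S| states, where S := {s ∈ ℤ : −||t||^+ < s < ||t||^−}. -/

import Mathlib

namespace Presburger

/-- A letter of the alphabet `Σ^r`, where `Σ = {0, …, ρ-1}`. -/
abbrev Letter (ρ r : ℕ) := Fin r → Fin ρ

/-- The natural number encoded by a word over `Σ` (most significant digit first). -/
def natVal (ρ : ℕ) (w : List ℕ) : ℕ := w.foldl (fun acc b => ρ * acc + b) 0

/-- The integer encoded by a nonempty word over `Σ` (ρ's complement,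
most significant digit first); the empty word gets the junk value `0`. -/
def intVal (ρ : ℕ) : List ℕ → ℤ
  | [] => 0
  | b :: u => (natVal ρ u : ℤ) - (if b = 0 then 0 else (ρ : ℤ) ^ u.length)

/-- The tuple of natural numbers encoded track-wise by a word over `Σ^r` (as integers). -/
def natVec (ρ r : ℕ) (w : List (Letter ρ r)) : Fin r → ℤ :=
  fun i => (natVal ρ (w.map fun b => (b i : ℕ)) : ℤ)

/-- The tuple of integers encoded track-wise by a nonempty word over `Σ^r`. -/
def intVec (ρ r : ℕ) (w : List (Letter ρ r)) : Fin r → ℤ :=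
  fun i => intVal ρ (w.map fun b => (b i : ℕ))

/-- A language over `Σ^r` represents a set `U ⊆ ℤ^r` if it consists exactly of the
nonempty words encoding a member of `U`. -/
def Represents (ρ r : ℕ) (L : Language (Letter ρ r)) (U : Set (Fin r → ℤ)) : Prop :=
  ∀ w : List (Letter ρ r), w ∈ L ↔ (w ≠ [] ∧ intVec ρ r w ∈ U)

/-- A DFA represents `U ⊆ ℤ^r` if its accepted language does. -/
def DFARepresents (ρ r : ℕ) {σ : Type*} (M : DFA (Letter ρ r) σ) (U : Set (Fin r → ℤ)) : Prop :=
  Represents ρ r M.accepts U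

/-- Value of the homogeneous term with coefficients `k` at the point `a`. -/
def tval {r : ℕ} (k : Fin r → ℤ) (a : Fin r → ℤ) : ℤ := ∑ i, k i * a i

/-- A homogeneous term is `0` or has all its coefficients nonzero. -/
def Homog {r : ℕ} (k : Fin r → ℤ) : Prop := k = 0 ∨ ∀ i, k i ≠ 0

/-- `σ(b)`: componentwise `0` if the digit is `0` and `-1` otherwise. -/
def sgnLetter {ρ r : ℕ} (b : Letter ρ r) : Fin r → ℤ :=
  fun i => if (b i : ℕ) = 0 then 0 else -1

/-- The letter `b` viewed as a tuple of integers. -/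
def letterInt {ρ r : ℕ} (b : Letter ρ r) : Fin r → ℤ := fun i => ((b i : ℕ) : ℤ)

/-- `‖t‖⁺`: the sum of the positive coefficients of `t`. -/
def posNorm {r : ℕ} (k : Fin r → ℤ) : ℤ := ∑ i, max (k i) 0

/-- `‖t‖⁻`: the sum of the absolute values of the negative coefficients of `t`. -/
def negNorm {r : ℕ} (k : Fin r → ℤ) : ℤ := ∑ i, max (-k i) 0

/-- `gcd(t)`: the gcd of the absolute values of the coefficients of `t`. -/
def gcdT {r : ℕ} (k : Fin r → ℤ) : ℕ := Finset.univ.gcd fun i => (k i).natAbs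

/-- The transition function `η` of the infinite-state automaton for `t`,
restricted to the integer states: `η(q, b) = ρ·q + t[b]`. -/
def etaStep (ρ : ℕ) {r : ℕ} (k : Fin r → ℤ) (q : ℤ) (b : Letter ρ r) : ℤ :=
  ρ * q + tval k (letterInt b)

/-- The transition of `η` out of the initial state: `η(q_I, b) = t[σ(b)]`. -/
def etaInit (ρ : ℕ) {r : ℕ} (k : Fin r → ℤ) (b : Letter ρ r) : ℤ :=
  tval k (sgnLetter b)

/-- A state `q` is small (for `t ⋈ c`) if `q < min{c, -‖t‖⁺}`. -/
def IsSmall {r : ℕ} (k : Fin r → ℤ) (c q : ℤ) : Prop := q < min c (-posNorm k)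

/-- A state `q` is large (for `t ⋈ c`) if `q > max{c, ‖t‖⁻}`. -/
def IsLarge {r : ℕ} (k : Fin r → ℤ) (c q : ℤ) : Prop := max c (negNorm k) < q

/-- The six relations `=, ≠, <, ≤, >, ≥` on `ℤ`. -/
def rel6 : Set (ℤ → ℤ → Prop) :=
  {fun x y => x = y, fun x y => x ≠ y, fun x y => x < y,
   fun x y => x ≤ y, fun x y => x > y, fun x y => x ≥ y}

/-- Clamp an integer into the state set `{m, …, n}`; yields `none` (the initial state)
only in the degenerate case `m > n`, which never occurs for small `m` and large `n`. -/
noncomputable def clampSt (m n x : ℤ) : Option ↥(Finset.Icc m n) :=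
  if h : max m (min n x) ∈ Finset.Icc m n then some ⟨max m (min n x), h⟩ else none

/-- The DFA `A^{t ⋈ c}_{(m,n)}` for the (in)equation `t ⋈ c`: states are
`q_I = none` together with `{m, …, n}`, transitions clamp `η` to `[m, n]`, and the
accepting states are the integer states `q` with `q ⋈ c`. -/
noncomputable def ineqDFA (ρ : ℕ) {r : ℕ} (k : Fin r → ℤ) (m n : ℤ) (rel : ℤ → ℤ → Prop) (c : ℤ) :
    DFA (Letter ρ r) (Option ↥(Finset.Icc m n)) where
  step q b :=
    match q with
    | none => clampSt m n (etaInit ρ k b)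
    | some z => clampSt m n (etaStep ρ k z.val b)
  start := none
  accept := {q | ∃ z : ↥(Finset.Icc m n), q = some z ∧ rel z.val c}

/-- Two states of a DFA are equivalent if they accept exactly the same words. -/
def stEquiv {α : Type*} {σ : Type*} (M : DFA α σ) (p q : σ) : Prop :=
  ∀ w : List α, (M.evalFrom p w ∈ M.accept ↔ M.evalFrom q w ∈ M.accept)

end Presburger

namespace Presburger

lemma natVal_foldl (ρ : ℕ) (w : List ℕ) (a : ℕ) :
    w.foldl (fun acc b => ρ * acc + b) a = ρ ^ w.length * a + natVal ρ w := by
  induction w generalizing a with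
  | nil => simp [natVal]
  | cons b w ih =>
    have h1 : (b :: w).foldl (fun acc b => ρ * acc + b) a
        = w.foldl (fun acc b => ρ * acc + b) (ρ * a + b) := rfl
    have h2 : natVal ρ (b :: w) = w.foldl (fun acc b => ρ * acc + b) (ρ * 0 + b) := rfl
    rw [h1, ih, h2, ih (ρ * 0 + b)]
    simp [List.length_cons, pow_succ]
    ring

lemma natVal_cons (ρ : ℕ) (b : ℕ) (u : List ℕ) :
    natVal ρ (b :: u) = ρ ^ u.length * b + natVal ρ u := by
  have h2 : natVal ρ (b :: u) = u.foldl (fun acc b => ρ * acc + b) (ρ * 0 + b) := rfl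
  rw [h2, natVal_foldl]
  simp

lemma natVal_append (ρ : ℕ) (w u : List ℕ) :
    natVal ρ (w ++ u) = ρ ^ u.length * natVal ρ w + natVal ρ u := by
  have : natVal ρ (w ++ u) = u.foldl (fun acc b => ρ * acc + b) (natVal ρ w) := by
    simp [natVal, List.foldl_append]
  rw [this, natVal_foldl]

lemma intVal_append (ρ : ℕ) (w u : List ℕ) (hw : w ≠ []) :
    intVal ρ (w ++ u) = (ρ : ℤ) ^ u.length * intVal ρ w + (natVal ρ u : ℤ) := by
  obtain ⟨b, w', rfl⟩ := List.exists_cons_of_ne_nil hw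
  simp only [List.cons_append, intVal, natVal_append, List.length_append]
  push_cast
  split <;> ring

end Presburger

namespace Presburger

lemma tval_comb {r : ℕ} (k : Fin r → ℤ) (x : ℤ) (a b : Fin r → ℤ) :
    tval k (fun i => x * a i + b i) = x * tval k a + tval k b := by
  simp only [tval, Finset.mul_sum, ← Finset.sum_add_distrib]
  refine Finset.sum_congr rfl fun i _ => by ring

lemma tval_intVec_append (ρ r : ℕ) (k : Fin r → ℤ) (w u : List (Letter ρ r)) (hw : w ≠ []) :
    tval k (intVec ρ r (w ++ u))
      = (ρ : ℤ) ^ u.length * tval k (intVec ρ r w) + tval k (natVec ρ r u) := by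
  rw [← tval_comb]
  refine Finset.sum_congr rfl fun i _ => ?_
  have : intVec ρ r (w ++ u) i = (ρ : ℤ) ^ u.length * intVec ρ r w i + natVec ρ r u i := by
    simp only [intVec, natVec, List.map_append]
    rw [intVal_append ρ _ _ (by simpa using hw)]
    simp
  rw [this]

/-- Digit word of length `L` for a tuple of naturals. -/
def natWord (ρ r : ℕ) (hρ : 0 < ρ) : ℕ → (Fin r → ℕ) → List (Letter ρ r)
  | 0, _ => []
  | L + 1, n => (fun i => ⟨n i / ρ ^ L % ρ, Nat.mod_lt _ hρ⟩) :: natWord ρ r hρ L (fun i => n i % ρ ^ L)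

@[simp] lemma natWord_length (ρ r : ℕ) (hρ : 0 < ρ) (L : ℕ) (n : Fin r → ℕ) :
    (natWord ρ r hρ L n).length = L := by
  induction L generalizing n with
  | zero => rfl
  | succ L ih => simp [natWord, ih]

lemma natVal_natWord (ρ r : ℕ) (hρ : 0 < ρ) (L : ℕ) (n : Fin r → ℕ) (i : Fin r)
    (hn : n i < ρ ^ L) :
    natVal ρ ((natWord ρ r hρ L n).map fun b => (b i : ℕ)) = n i := by
  induction L generalizing n with
  | zero => simpa [natWord, natVal] using (Nat.lt_one_iff.mp (by simpa using hn)).symm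
  | succ L ih =>
    simp only [natWord, List.map_cons, natVal_cons, List.length_map, natWord_length]
    rw [ih _ (Nat.mod_lt _ (pow_pos hρ L))]
    have hdiv : n i / ρ ^ L < ρ := Nat.div_lt_of_lt_mul (by rw [← pow_succ]; exact hn)
    rw [Nat.mod_eq_of_lt hdiv, Nat.div_add_mod]

end Presburger

namespace Presburger

lemma exists_natWord (ρ r : ℕ) (hρ : 2 ≤ ρ) (L : ℕ) (n : Fin r → ℤ)
    (hn : ∀ i, 0 ≤ n i ∧ n i < (ρ : ℤ) ^ L) :
    ∃ u : List (Letter ρ r), u.length = L ∧ natVec ρ r u = n := by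
  have hρ0 : 0 < ρ := by omega
  refine ⟨natWord ρ r hρ0 L (fun i => (n i).toNat), by simp, ?_⟩
  funext i
  have h1 : (n i).toNat < ρ ^ L := by
    have := (hn i).2
    have h0 := (hn i).1
    zify [h0]
    omega
  simp only [natVec]
  rw [natVal_natWord ρ r hρ0 L (fun i => (n i).toNat) i h1]
  exact Int.toNat_of_nonneg (hn i).1

lemma exists_intWord (ρ r : ℕ) (hρ : 2 ≤ ρ) (a : Fin r → ℤ) :
    ∃ w : List (Letter ρ r), w ≠ [] ∧ intVec ρ r w = a := by
  have hρ0 : 0 < ρ := by omega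
  obtain ⟨L, hL⟩ := pow_unbounded_of_one_lt (R := ℤ) (y := (ρ:ℤ)) (∑ i, |a i|) (by exact_mod_cast Nat.lt_of_lt_of_le one_lt_two hρ)
  have habs : ∀ i, |a i| < (ρ : ℤ) ^ L := fun i =>
    lt_of_le_of_lt (Finset.single_le_sum (fun j _ => abs_nonneg (a j)) (Finset.mem_univ i)) hL
  set b : Letter ρ r := fun i => if 0 ≤ a i then (⟨0, by omega⟩ : Fin ρ) else ⟨1, by omega⟩ with hb
  set n : Fin r → ℤ := fun i => if 0 ≤ a i then a i else a i + (ρ : ℤ) ^ L with hn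
  have hnb : ∀ i, 0 ≤ n i ∧ n i < (ρ : ℤ) ^ L := by
    intro i
    have := habs i
    rw [hn]
    rcases le_or_gt 0 (a i) with h | h
    · rw [abs_of_nonneg h] at this; simp [h, this]
    · rw [abs_of_neg h] at this
      simp only [not_le.mpr h, if_false]
      omega
  obtain ⟨u, hul, huv⟩ := exists_natWord ρ r hρ L n hnb
  refine ⟨b :: u, by simp, ?_⟩
  funext i
  have : intVec ρ r (b :: u) i
      = natVec ρ r u i - (if ((b i : ℕ)) = 0 then 0 else (ρ : ℤ) ^ u.length) := by
    simp [intVec, natVec, intVal, List.length_map]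
  rw [this, huv, hul]
  rcases le_or_gt 0 (a i) with h | h
  · simp [hn, hb, h]
  · have : ¬ (0 ≤ a i) := not_le.mpr h
    simp only [hn, hb, this, if_false]
    norm_num

end Presburger

namespace Presburger

lemma exists_bezout {ι : Type*} [DecidableEq ι] (S : Finset ι) (k : ι → ℤ) :
    ∃ e : ι → ℤ, ∑ i ∈ S, k i * e i = ((S.gcd fun i => (k i).natAbs : ℕ) : ℤ) := by
  classical
  induction S using Finset.induction_on with
  | empty => exact ⟨0, by simp⟩
  | @insert a S ha ih =>
    obtain ⟨e, he⟩ := ih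
    set g : ℕ := S.gcd fun i => (k i).natAbs with hg
    refine ⟨fun i => if i = a then (k a).gcdA (g : ℤ) else (k a).gcdB (g : ℤ) * e i, ?_⟩
    rw [Finset.sum_insert ha, Finset.gcd_insert]
    have hsum : ∑ i ∈ S, k i * (if i = a then (k a).gcdA (g : ℤ)
        else (k a).gcdB (g : ℤ) * e i) = (k a).gcdB (g : ℤ) * ∑ i ∈ S, k i * e i := by
      rw [Finset.mul_sum]
      refine Finset.sum_congr rfl fun i hi => ?_
      rw [if_neg (by rintro rfl; exact ha hi)]
      ring
    rw [hsum, he]; simp only [if_true, eq_self_iff_true]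
    have hb := Int.gcd_eq_gcd_ab (k a) (g : ℤ)
    have hgg : Int.gcd (k a) (g : ℤ) = Nat.gcd (k a).natAbs g := by
      simp [Int.gcd]
    have hgcdm : GCDMonoid.gcd ((k a).natAbs) g = Nat.gcd (k a).natAbs g := rfl
    rw [hgcdm]
    rw [← hgg, hb]
    ring

lemma exists_bezout_one {r : ℕ} (k : Fin r → ℤ) (hgcd : gcdT k = 1) :
    ∃ e : Fin r → ℤ, ∑ i, k i * e i = 1 := by
  obtain ⟨e, he⟩ := exists_bezout Finset.univ k
  exact ⟨e, by rw [he]; rw [gcdT] at hgcd; rw [hgcd]; rfl⟩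

end Presburger

namespace Presburger

lemma achieve_nonpos (ρ : ℕ) (hρ : 2 ≤ ρ) {r : ℕ} (k : Fin r → ℤ) (hk : ∀ i, k i ≠ 0)
    (e : Fin r → ℤ) (he : ∑ i, k i * e i = 1) (c s : ℤ)
    (hs1 : -posNorm k < s) (hs2 : s ≤ 0) (hQ' : s < 0 ∨ 0 < negNorm k) :
    ∃ (L : ℕ) (n : Fin r → ℤ), (∀ i, 0 ≤ n i ∧ n i < (ρ : ℤ) ^ L) ∧
      ∑ i, k i * n i = c - (ρ : ℤ) ^ L * s := by
  set P := posNorm k with hPdef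
  set Q := negNorm k with hQdef
  have hP : 0 < P := by omega
  have hQ0 : 0 ≤ Q := Finset.sum_nonneg fun i _ => le_max_right _ _
  set E := ∑ i, |e i| with hEdef
  have hE : ∀ i, |e i| ≤ E :=
    fun i => Finset.single_le_sum (fun j _ => abs_nonneg (e j)) (Finset.mem_univ i)
  have hE0 : 0 ≤ E := Finset.sum_nonneg fun i _ => abs_nonneg _
  set B := P * E with hBdef
  have hB0 : 0 ≤ B := mul_nonneg hP.le hE0
  set b := B * P + P + |c| + B + 1 with hbdef
  have hb0 : 0 < b := by positivity
  have hBP : 0 ≤ B * P := mul_nonneg hB0 hP.le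
  have hbB : B ≤ b := by linarith [abs_nonneg c]
  set C := |c| + b * Q + B * P + P + b + B + 1 with hCdef
  obtain ⟨L, hL⟩ := pow_unbounded_of_one_lt (R := ℤ) (y := (ρ : ℤ)) C
    (by exact_mod_cast Nat.lt_of_lt_of_le one_lt_two hρ)
  set R := (ρ : ℤ) ^ L with hRdef
  have hR0 : 0 < R := pow_pos (by positivity) L
  set X := c + b * Q - R * s with hXdef
  set j := X % P with hjdef
  set a := X / P with hadef
  have haj : P * a + j = X := Int.mul_ediv_add_emod X P
  have hj0 : 0 ≤ j := Int.emod_nonneg X (ne_of_gt hP)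
  have hjP : j < P := Int.emod_lt_of_pos X hP
  refine ⟨L, fun i => (if 0 < k i then a else b) + j * e i, ?_, ?_⟩
  · -- bounds
    have hje : ∀ i, |j * e i| ≤ B := by
      intro i
      rw [abs_mul, abs_of_nonneg hj0]
      calc j * |e i| ≤ P * E := by
            apply mul_le_mul hjP.le (hE i) (abs_nonneg _) hP.le
        _ = B := rfl
    -- lower bound on X
    have hRs : R * s ≤ 0 := mul_nonpos_of_nonneg_of_nonpos hR0.le hs2
    have hbQ : 0 ≤ b * Q := mul_nonneg hb0.le hQ0
    have hXlb : B * P + P + 1 ≤ X := by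
      rcases hQ' with hs | hQ
      · have h1 : R * 1 ≤ R * (-s) := mul_le_mul_of_nonneg_left (by omega) hR0.le
        have h2 : C < R := hL
        linarith [neg_abs_le c]
      · have h1 : b * 1 ≤ b * Q := mul_le_mul_of_nonneg_left (by omega) hb0.le
        linarith [neg_abs_le c]
    have haB : B < a := by
      have h1 : P * B < P * a := by
        have hc := mul_comm P B
        linarith [haj, hXlb, hjP]
      exact lt_of_mul_lt_mul_left h1 hP.le
    -- upper bound on X and a
    have hXub : X ≤ |c| + b * Q + R * (P - 1) := by
      have h1 : R * (-s) ≤ R * (P - 1) := mul_le_mul_of_nonneg_left (by omega) hR0.le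
      linarith [le_abs_self c]
    have haub : a + B < R := by
      have h1 : P * (a + B) < P * R := by
        have h2 : |c| + b * Q + B * P + 1 ≤ C := by linarith
        nlinarith [haj, hXub, hL, hj0]
      exact lt_of_mul_lt_mul_left h1 hP.le
    have hbub : b + B < R := by
      have : b + B ≤ C := by linarith [abs_nonneg c]
      omega
    intro i
    dsimp only
    have hjei := hje i
    rw [abs_le] at hjei
    rcases (hk i).lt_or_gt with hki | hki
    · rw [if_neg (by omega)]
      constructor <;> omega
    · rw [if_pos hki]
      constructor <;> omega
  · -- value
    have hsplit : ∑ i, k i * ((if 0 < k i then a else b) + j * e i)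
        = (∑ i, k i * (if 0 < k i then a else b)) + j * ∑ i, k i * e i := by
      rw [Finset.mul_sum, ← Finset.sum_add_distrib]
      exact Finset.sum_congr rfl fun i _ => by ring
    have hterm : ∀ i, k i * (if 0 < k i then a else b)
        = max (k i) 0 * a - max (-k i) 0 * b := by
      intro i
      rcases (hk i).lt_or_gt with hki | hki
      · rw [if_neg (by omega), max_eq_right hki.le, max_eq_left (by omega)]
        ring
      · rw [if_pos hki, max_eq_left hki.le, max_eq_right (by omega)]
        ring
    have hmain : ∑ i, k i * (if 0 < k i then a else b) = P * a - Q * b := by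
      rw [Finset.sum_congr rfl fun i _ => hterm i, Finset.sum_sub_distrib,
        ← Finset.sum_mul, ← Finset.sum_mul]
      rfl
    rw [hsplit, hmain, he]
    rw [hXdef] at haj
    linarith
end Presburger

namespace Presburger

lemma posNorm_neg {r : ℕ} (k : Fin r → ℤ) : posNorm (fun i => -k i) = negNorm k := rfl

lemma achieve (ρ : ℕ) (hρ : 2 ≤ ρ) {r : ℕ} (k : Fin r → ℤ) (hk : ∀ i, k i ≠ 0)
    (e : Fin r → ℤ) (he : ∑ i, k i * e i = 1) (c s : ℤ)
    (hs1 : -posNorm k < s) (hs2 : s < negNorm k) :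
    ∃ (L : ℕ) (n : Fin r → ℤ), (∀ i, 0 ≤ n i ∧ n i < (ρ : ℤ) ^ L) ∧
      ∑ i, k i * n i = c - (ρ : ℤ) ^ L * s := by
  rcases le_or_gt s 0 with hs0 | hs0
  · exact achieve_nonpos ρ hρ k hk e he c s hs1 hs0 (by omega)
  · obtain ⟨L, n, hbnd, hval⟩ := achieve_nonpos ρ hρ (fun i => -k i)
      (fun i => neg_ne_zero.mpr (hk i)) (fun i => -e i)
      (by rw [← he]; exact Finset.sum_congr rfl fun i _ => by ring)
      (-c) (-s) (by rw [posNorm_neg]; omega) (by omega) (Or.inl (by omega))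
    refine ⟨L, n, hbnd, ?_⟩
    have : ∑ i, (fun i => -k i) i * n i = -∑ i, k i * n i := by
      rw [← Finset.sum_neg_distrib]
      exact Finset.sum_congr rfl fun i _ => by ring
    rw [this] at hval
    linarith

lemma exists_word_tval (ρ r : ℕ) (hρ : 2 ≤ ρ) (k : Fin r → ℤ)
    (e : Fin r → ℤ) (he : ∑ i, k i * e i = 1) (s : ℤ) :
    ∃ w : List (Letter ρ r), w ≠ [] ∧ tval k (intVec ρ r w) = s := by
  obtain ⟨w, hw, hwv⟩ := exists_intWord ρ r hρ (fun i => s * e i)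
  refine ⟨w, hw, ?_⟩
  rw [hwv, tval]
  rw [show ∑ i, k i * (s * e i) = s * ∑ i, k i * e i by
    rw [Finset.mul_sum]; exact Finset.sum_congr rfl fun i _ => by ring, he, mul_one]

theorem stmt_8' (ρ r : ℕ) (hρ : 2 ≤ ρ) (k : Fin r → ℤ) (hk : Homog k)
    (hgcd : gcdT k = 1) (c : ℤ)
    (σ : Type*) [Fintype σ] (M : DFA (Letter ρ r) σ)
    (hM : DFARepresents ρ r M {a | tval k a = c}) :
    (Finset.Ioo (-posNorm k) (negNorm k)).card ≤ Fintype.card σ := by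
  have hk0 : ∀ i, k i ≠ 0 := by
    rcases hk with hk | hk
    · exfalso
      have : gcdT k = 0 := Finset.gcd_eq_zero_iff.mpr (by intro i _; simp [hk])
      omega
    · exact hk
  obtain ⟨e, he⟩ := exists_bezout_one k hgcd
  have hword := fun s => exists_word_tval ρ r hρ k e he s
  choose ws hw1 hw2 using hword
  rw [← Finset.card_univ]
  apply Finset.card_le_card_of_injOn (fun s => M.eval (ws s))
    (fun _ _ => Finset.mem_univ _)
  intro s hs s' hs' heq
  simp only [Finset.coe_Ioo, Set.mem_Ioo] at hs hs'
  obtain ⟨L, n, hbnd, hval⟩ := achieve ρ hρ k hk0 e he c s hs.1 hs.2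
  obtain ⟨u, hul, huv⟩ := exists_natWord ρ r hρ L n hbnd
  have htu : tval k (natVec ρ r u) = c - (ρ : ℤ) ^ L * s := by
    rw [huv]; exact hval
  have hval1 : tval k (intVec ρ r (ws s ++ u)) = c := by
    rw [tval_intVec_append ρ r k _ _ (hw1 s), hw2 s, htu, hul]
    ring
  have hacc1 : ws s ++ u ∈ M.accepts :=
    (hM _).mpr ⟨by simp [hw1 s], hval1⟩
  have hevaleq : M.eval (ws s' ++ u) = M.eval (ws s ++ u) := by
    show M.evalFrom M.start (ws s' ++ u) = M.evalFrom M.start (ws s ++ u)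
    rw [DFA.evalFrom_of_append, DFA.evalFrom_of_append]
    simp only at heq
    show M.evalFrom (M.eval (ws s')) u = M.evalFrom (M.eval (ws s)) u
    rw [heq]
  have hacc2 : ws s' ++ u ∈ M.accepts := by
    rw [DFA.mem_accepts, hevaleq, ← DFA.mem_accepts]
    exact hacc1
  have hval2 := ((hM _).mp hacc2).2
  rw [Set.mem_setOf_eq, tval_intVec_append ρ r k _ _ (hw1 s'), hw2 s', htu, hul] at hval2
  have hR : ((ρ : ℤ) ^ L) ≠ 0 := by positivity
  have : (ρ : ℤ) ^ L * s' = (ρ : ℤ) ^ L * s := by linarith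
  exact (mul_left_cancel₀ hR this).symm

end Presburger


namespace Presburger

/-- Every DFA representing `{a ∈ ℤ^r : t[a] = c}` (where `gcd(t) = 1`) has at least
`|S|` states, where `S = {s ∈ ℤ : −‖t‖⁺ < s < ‖t‖⁻}`. -/
theorem stmt_8 (ρ r : ℕ) (hρ : 2 ≤ ρ) (k : Fin r → ℤ) (hk : Homog k)
    (hgcd : gcdT k = 1) (c : ℤ)
    (σ : Type*) [Fintype σ] (M : DFA (Letter ρ r) σ)
    (hM : DFARepresents ρ r M {a | tval k a = c}) :
    (Finset.Ioo (-posNorm k) (negNorm k)).card ≤ Fintype.card σ := by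
  exact stmt_8' ρ r hρ k hk hgcd c σ M hM

end Presburger
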